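/- Let T_n^p be the graph obtained from the complete bipartite graph K_{2,n} by attaching one copy of D_n^p (path on p vertices plus n leaves at one end) at each of the two vertices of degree n. Then def(T_{n-2}^p) = 3n − 8 for n ≥ 4 and odd p ≥ 3. -/
import Mathlib


open SimpleGraph

/-- The deficiency of a graph: number of vertices left unsaturated by a maximum matching. -/
noncomputable def deficiency {V : Type*} (G : SimpleGraph V) : ℕ :=
  Nat.card V - sSup {n | ∃ M : G.Subgraph, M.IsMatching ∧ M.verts.ncard = n}

/-- `T_n^p`: the graph obtained from `K_{2,n}` by attaching one copy of `D_n^p`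
(a path on `p` vertices with `n` extra leaves at one end) at each of the two vertices
of degree `n`. `Sum.inl (s, Sum.inl a)` is path position `a` on side `s` (position `0`
being the degree-`n` vertex of `K_{2,n}`), `Sum.inl (s, Sum.inr k)` the leaves attached
at path position `p-1` on side `s`, and `Sum.inr t` the `n` middle vertices of `K_{2,n}`. -/
def tnpGraph (n p : ℕ) : SimpleGraph ((Fin 2 × (Fin p ⊕ Fin n)) ⊕ Fin n) :=
  SimpleGraph.fromRel (fun a b =>
    match a, b with
    | Sum.inl (s, Sum.inl a'), Sum.inl (s', Sum.inl b') => s = s' ∧ (a' : ℕ) + 1 = (b' : ℕ)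
    | Sum.inl (s, Sum.inl a'), Sum.inl (s', Sum.inr _) => s = s' ∧ (a' : ℕ) = p - 1
    | Sum.inl (_, Sum.inl a'), Sum.inr _ => (a' : ℕ) = 0
    | _, _ => False)

namespace TnpAux

/-- Even path positions (a vertex cover of `tnpGraph (m+2) (2q+1)`). -/
def uf (m q : ℕ) (x : Fin 2 × Fin (q + 1)) :
    (Fin 2 × (Fin (2 * q + 1) ⊕ Fin (m + 2))) ⊕ Fin (m + 2) :=
  Sum.inl (x.1, Sum.inl ⟨2 * x.2, by have := x.2.isLt; omega⟩)

/-- Matching partners of the even path positions: odd path positions and a leaf at the end. -/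
def wf (m q : ℕ) (x : Fin 2 × Fin (q + 1)) :
    (Fin 2 × (Fin (2 * q + 1) ⊕ Fin (m + 2))) ⊕ Fin (m + 2) :=
  if h : (x.2 : ℕ) < q then Sum.inl (x.1, Sum.inl ⟨2 * x.2 + 1, by omega⟩)
  else Sum.inl (x.1, Sum.inr ⟨0, by omega⟩)

lemma uf_inj (m q : ℕ) : Function.Injective (uf m q) := by
  intro x y h
  simp only [uf, Sum.inl.injEq, Prod.mk.injEq, Fin.mk.injEq] at h
  exact Prod.ext h.1 (Fin.ext (by omega))

lemma wf_inj (m q : ℕ) : Function.Injective (wf m q) := by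
  intro x y h
  simp only [wf] at h
  split_ifs at h with h1 h2 h2 <;>
    simp only [Sum.inl.injEq, Sum.inr.injEq, Prod.mk.injEq, Fin.mk.injEq,
      reduceCtorEq, and_false] at h <;>
    exact Prod.ext h.1 (Fin.ext (by omega))

lemma uf_wf_disjoint (m q : ℕ) : Disjoint (Set.range (uf m q)) (Set.range (wf m q)) := by
  rw [Set.disjoint_left]
  rintro a ⟨x, rfl⟩ ⟨y, hy⟩
  by_cases h : (y.2 : ℕ) < q
  · simp only [wf, dif_pos h, uf, Sum.inl.injEq, Prod.mk.injEq, Fin.mk.injEq] at hy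
    omega
  · simp only [wf, dif_neg h, uf, Sum.inl.injEq, Prod.mk.injEq, reduceCtorEq, and_false] at hy

lemma uf_wf_adj (m q : ℕ) (x : Fin 2 × Fin (q + 1)) :
    (tnpGraph (m + 2) (2 * q + 1)).Adj (uf m q x) (wf m q x) := by
  have hx := x.2.isLt
  simp only [tnpGraph, fromRel_adj]
  by_cases h : (x.2 : ℕ) < q
  · simp only [uf, wf, dif_pos h, ne_eq, Sum.inl.injEq, Prod.mk.injEq, Fin.mk.injEq]
    exact ⟨by simp only [true_and]; omega, Or.inl ⟨trivial, trivial⟩⟩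
  · simp only [uf, wf, dif_neg h, ne_eq, Sum.inl.injEq, Prod.mk.injEq, reduceCtorEq,
      and_false, not_false_eq_true, true_and]
    left; omega

lemma exists_matching (m q : ℕ) :
    ∃ M : (tnpGraph (m + 2) (2 * q + 1)).Subgraph,
      M.IsMatching ∧ M.verts.ncard = 2 * (2 * q + 1) + 2 := by
  classical
  have hu := uf_inj m q
  have hw := wf_inj m q
  have hdisj := uf_wf_disjoint m q
  let f : Set.range (uf m q) ≃ Set.range (wf m q) :=
    (Equiv.ofInjective _ hu).symm.trans (Equiv.ofInjective _ hw)
  have hadj : ∀ v : Set.range (uf m q), (tnpGraph (m + 2) (2 * q + 1)).Adj v (f v) := by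
    rintro ⟨v, x, rfl⟩
    have h1 : (Equiv.ofInjective _ hu).symm ⟨uf m q x, x, rfl⟩ = x := by
      apply hu
      rw [Equiv.apply_ofInjective_symm hu]
    have h2 : f ⟨uf m q x, x, rfl⟩ = ⟨wf m q x, x, rfl⟩ := by
      simp only [f, Equiv.trans_apply, h1]
      rfl
    rw [h2]
    exact uf_wf_adj m q x
  obtain ⟨M, hMv, hMm⟩ :=
    Subgraph.IsMatching.exists_of_disjoint_sets_of_equiv hdisj f hadj
  refine ⟨M, hMm, ?_⟩
  rw [hMv, Set.ncard_union_eq hdisj (Set.toFinite _) (Set.toFinite _)]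
  have h1 : (Set.range (uf m q)).ncard = 2 * (q + 1) := by
    rw [← Nat.card_coe_set_eq, Nat.card_range_of_injective hu]
    simp [Nat.card_eq_fintype_card]
  have h2 : (Set.range (wf m q)).ncard = 2 * (q + 1) := by
    rw [← Nat.card_coe_set_eq, Nat.card_range_of_injective hw]
    simp [Nat.card_eq_fintype_card]
  omega

lemma key (m q : ℕ) (σ : Fin 2) (a' : Fin (2 * q + 1)) (he : Even (a' : ℕ)) :
    ∃ x, uf m q x = Sum.inl (σ, Sum.inl a') := by
  obtain ⟨j, hj⟩ := he
  have hlt := a'.isLt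
  refine ⟨(σ, ⟨j, by omega⟩), ?_⟩
  refine congrArg Sum.inl (congrArg _ (congrArg Sum.inl (Fin.ext ?_)))
  show 2 * j = (a' : ℕ)
  omega

/-- Every edge of the graph has an endpoint at an even path position. -/
lemma adj_even (m q : ℕ) {a b : (Fin 2 × (Fin (2 * q + 1) ⊕ Fin (m + 2))) ⊕ Fin (m + 2)}
    (h : (tnpGraph (m + 2) (2 * q + 1)).Adj a b) :
    (∃ x, uf m q x = a) ∨ (∃ x, uf m q x = b) := by
  simp only [tnpGraph, fromRel_adj] at h
  obtain ⟨-, h⟩ := h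
  rcases a with (⟨σ, a' | k⟩ | t) <;> rcases b with (⟨σ', b' | k'⟩ | t')
  · -- path path
    have h' : (a' : ℕ) + 1 = (b' : ℕ) ∨ (b' : ℕ) + 1 = (a' : ℕ) := by
      rcases h with h | h
      · exact Or.inl h.2
      · exact Or.inr h.2
    rcases Nat.even_or_odd (a' : ℕ) with he | ho
    · exact Or.inl (key m q σ a' he)
    · refine Or.inr (key m q σ' b' ?_)
      obtain ⟨c, hc⟩ := ho
      rcases h' with h' | h'
      · exact ⟨c + 1, by omega⟩
      · exact ⟨c, by omega⟩
  · -- path leaf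
    have h' : (a' : ℕ) = 2 * q + 1 - 1 := by
      rcases h with h | h
      · exact h.2
      · exact h.elim
    exact Or.inl (key m q σ a' ⟨q, by omega⟩)
  · -- path middle
    have h' : (a' : ℕ) = 0 := by
      rcases h with h | h
      · exact h
      · exact h.elim
    exact Or.inl (key m q σ a' ⟨0, by omega⟩)
  · -- leaf path
    have h' : (b' : ℕ) = 2 * q + 1 - 1 := by
      rcases h with h | h
      · exact h.elim
      · exact h.2
    exact Or.inr (key m q σ' b' ⟨q, by omega⟩)
  · exact absurd h (by rintro (h | h) <;> exact h)
  · exact absurd h (by rintro (h | h) <;> exact h)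
  · -- middle path
    have h' : (b' : ℕ) = 0 := by
      rcases h with h | h
      · exact h.elim
      · exact h
    exact Or.inr (key m q σ' b' ⟨0, by omega⟩)
  · exact absurd h (by rintro (h | h) <;> exact h)
  · exact absurd h (by rintro (h | h) <;> exact h)

lemma matching_bound (m q : ℕ) (M : (tnpGraph (m + 2) (2 * q + 1)).Subgraph)
    (hM : M.IsMatching) : M.verts.ncard ≤ 2 * (2 * q + 1) + 2 := by
  classical
  have hfin : M.verts.Finite := Set.toFinite _
  have hch : ∀ v, v ∈ M.verts → ∃ w, M.Adj v w := fun v h => (hM h).exists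
  choose! f hadjf using hch
  have huniq : ∀ v (h : v ∈ M.verts) (w : _), M.Adj v w → f v = w :=
    fun v h w hw => (hM h).unique (hadjf v h) hw
  set g : (Fin 2 × (Fin (2 * q + 1) ⊕ Fin (m + 2))) ⊕ Fin (m + 2) →
      (Fin 2 × (Fin (2 * q + 1) ⊕ Fin (m + 2))) ⊕ Fin (m + 2) :=
    fun v => if (∃ x, uf m q x = v) then v else f v with hg
  set s := hfin.toFinset with hs
  set t := Finset.univ.image (uf m q) with ht
  have hmem : ∀ b, b ∈ t ↔ ∃ x, uf m q x = b := by
    intro b; simp [ht]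
  have hmaps : ∀ a ∈ s, g a ∈ t := by
    intro a ha
    rw [hs, Set.Finite.mem_toFinset] at ha
    by_cases h : ∃ x, uf m q x = a
    · rw [hg]; simp only [if_pos h]; exact (hmem a).mpr h
    · rw [hg]; simp only [if_neg h]
      have hadj : (tnpGraph (m + 2) (2 * q + 1)).Adj a (f a) := M.adj_sub (hadjf a ha)
      rcases adj_even m q hadj with h' | h'
      · exact absurd h' h
      · exact (hmem _).mpr h'
  have hfib : ∀ b ∈ t, (s.filter fun a => g a = b).card ≤ 2 := by
    intro b _
    have hsub : (s.filter fun a => g a = b) ⊆ {b, f b} := by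
      intro a ha
      rw [Finset.mem_filter] at ha
      obtain ⟨ha, hab⟩ := ha
      rw [hs, Set.Finite.mem_toFinset] at ha
      by_cases h : ∃ x, uf m q x = a
      · rw [hg] at hab; simp only [if_pos h] at hab
        simp [hab]
      · rw [hg] at hab; simp only [if_neg h] at hab
        have h1 : M.Adj a b := hab ▸ hadjf a ha
        have h2 : b ∈ M.verts := M.edge_vert h1.symm
        have h3 : f b = a := huniq b h2 a h1.symm
        simp [← h3]
    calc (s.filter fun a => g a = b).card ≤ ({b, f b} : Finset _).card :=
          Finset.card_le_card hsub
      _ ≤ 2 := (Finset.card_insert_le _ _).trans (by simp)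
  have hcard : s.card ≤ 2 * t.card :=
    Finset.card_le_mul_card_image_of_maps_to hmaps 2 hfib
  have hscard : s.card = M.verts.ncard := by
    rw [hs, Set.ncard_eq_toFinset_card _ hfin]
  have htcard : t.card = 2 * (q + 1) := by
    rw [ht, Finset.card_image_of_injective _ (uf_inj m q)]
    simp
  omega

end TnpAux

theorem stmt_16 (n p : ℕ) (hn : 4 ≤ n) (hp : Odd p) (hp3 : 3 ≤ p) :
    deficiency (tnpGraph (n - 2) p) = 3 * n - 8 := by
  obtain ⟨q, rfl⟩ := hp
  obtain ⟨m, hm⟩ : ∃ m, n - 2 = m + 2 := ⟨n - 4, by omega⟩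
  rw [hm]
  unfold deficiency
  have hsup : sSup {k | ∃ M : (tnpGraph (m + 2) (2 * q + 1)).Subgraph,
      M.IsMatching ∧ M.verts.ncard = k} = 2 * (2 * q + 1) + 2 := by
    apply IsGreatest.csSup_eq
    constructor
    · obtain ⟨M, h1, h2⟩ := TnpAux.exists_matching m q
      exact ⟨M, h1, h2⟩
    · rintro k ⟨M, hM, rfl⟩
      exact TnpAux.matching_bound m q M hM
  rw [hsup]
  have hcard : Nat.card ((Fin 2 × (Fin (2 * q + 1) ⊕ Fin (m + 2))) ⊕ Fin (m + 2))
      = 2 * ((2 * q + 1) + (m + 2)) + (m + 2) := by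
    simp [Nat.card_eq_fintype_card]
  rw [hcard]
  omega
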